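/- Let u, v, λ, D, B, N₀, P^S, P^C be positive real numbers and set h = 1/u + 1/v. Define for t > 0 the total expected energy E^sum(t) = N₀B(e^{D·ln2/(B t)} − 1)(e^{ut} − 1) + P^S( h e^{ut} + u/(v(u+v+λ)) − h ) + P^C( h e^{ut} + 1/λ + u/(v(u+v+λ)) − h ). Then E^sum is convex on the interval (0, √(D·ln2/(B u))) and strictly monotonically increasing on [√(D·ln2/(B u)), +∞). -/

import Mathlib

open Real Set

section CRIoTAux

private lemma mono_key' {a b : ℝ} (ha : 0 < a) (hab : a ≤ b) :
    a * Real.exp a * (Real.exp b - 1) ≤ b * Real.exp b * (Real.exp a - 1) := by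
  set x := Real.exp a with hxdef
  set r := Real.exp (b - a) with hrdef
  have hy : Real.exp b = x * r := by rw [hxdef, hrdef, ← Real.exp_add]; ring_nf
  have hx0 : 0 < x := Real.exp_pos a
  have hr0 : 0 < r := Real.exp_pos _
  have hx : a + 1 ≤ x := Real.add_one_le_exp a
  have hr : (b - a) + 1 ≤ r := Real.add_one_le_exp _
  have hr2 : r * (1 - (b - a)) ≤ 1 := by
    have h := Real.add_one_le_exp (-(b - a))
    rw [Real.exp_neg, ← hrdef] at h
    calc r * (1 - (b-a)) = r * (-(b-a) + 1) := by ring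
      _ ≤ r * r⁻¹ := by nlinarith
      _ = 1 := mul_inv_cancel₀ hr0.ne'
  rw [hy]
  have hd : 0 ≤ b - a := by linarith
  nlinarith [mul_nonneg (mul_nonneg hd hr0.le) (by linarith : (0:ℝ) ≤ x - 1 - a),
    mul_nonneg ha.le (by nlinarith : (0:ℝ) ≤ (b-a)*r - (r - 1)),
    mul_pos hx0 hr0, hx0.le, hr0.le]

private lemma conv_key' {a b : ℝ} (hb : 0 < b) (hba : b ≤ a) :
    2*a*b*(Real.exp a * Real.exp b) ≤ (2*a+a^2) * Real.exp a * (Real.exp b - 1)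
      + (Real.exp a - 1) * (b^2 * Real.exp b) := by
  set x := Real.exp a
  set y := Real.exp b
  have hx : a + 1 ≤ x := Real.add_one_le_exp a
  have hy : b + 1 ≤ y := Real.add_one_le_exp b
  have ha : 0 < a := lt_of_lt_of_le hb hba
  have hL : (0:ℝ) ≤ 2*a + (a-b)^2 := by positivity
  have h1 : 0 ≤ (x - (1+a)) * (b^2 + b*(a-b)^2) := by
    apply mul_nonneg (by linarith) (by positivity)
  have h2 : 0 ≤ (x - (1+a)) * ((y - (1+b)) * (2*a + (a-b)^2)) := by
    apply mul_nonneg (by linarith) (mul_nonneg (by linarith) hL)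
  have h3 : 0 ≤ (y - (1+b)) * ((1+a)*(2*a+(a-b)^2) - b^2) := by
    apply mul_nonneg (by linarith)
    nlinarith [sq_nonneg (a-b)]
  have h4 : 0 ≤ a*b*(a-b)*(1+a-b) := by
    apply mul_nonneg (mul_nonneg (mul_nonneg ha.le hb.le) (by linarith)) (by linarith)
  nlinarith [h1, h2, h3, h4]

private lemma hq' (u t : ℝ) : HasDerivAt (fun t => Real.exp (u*t)) (u * Real.exp (u*t)) t := by
  have h := ((hasDerivAt_id t).const_mul u).exp
  simp only [id] at h
  convert h using 1
  ring

private lemma hp' (K : ℝ) {t : ℝ} (ht : t ≠ 0) :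
    HasDerivAt (fun t => Real.exp (K/t)) (Real.exp (K/t) * (-(K/t^2))) t := by
  have h1 : HasDerivAt (fun t : ℝ => K / t) (-(K/t^2)) t := by
    have h := (hasDerivAt_inv ht).const_mul K
    have : K * -(t^2)⁻¹ = -(K/t^2) := by field_simp
    rw [this] at h
    simpa [div_eq_mul_inv] using h
  exact h1.exp

private lemma hm' (K : ℝ) {t : ℝ} (ht : t ≠ 0) :
    HasDerivAt (fun t : ℝ => -(K/t^2)) (2*K/t^3) t := by
  have h2 : HasDerivAt (fun t : ℝ => t^2) (2*t) t := by simpa using hasDerivAt_pow 2 t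
  have h := ((h2.inv (pow_ne_zero 2 ht)).const_mul K).neg
  have : -(K * (-(2*t) / (t^2)^2)) = 2*K/t^3 := by field_simp
  rw [this] at h
  simpa [div_eq_mul_inv, neg_mul, Pi.neg_def] using h

private lemma hasDerivAt_F (K u c1 c2 c3 : ℝ) {t : ℝ} (ht : t ≠ 0) :
    HasDerivAt (fun t => c1 * ((Real.exp (K/t) - 1) * (Real.exp (u*t) - 1)) + c2 * Real.exp (u*t) + c3)
      (c1 * (Real.exp (K/t) * (-(K/t^2)) * (Real.exp (u*t) - 1)
          + (Real.exp (K/t) - 1) * (u * Real.exp (u*t)))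
        + c2 * (u * Real.exp (u*t))) t := by
  exact ((((hp' K ht).sub_const 1).mul ((hq' u t).sub_const 1)).const_mul c1).add
    (((hq' u t).const_mul c2)) |>.add_const c3

private lemma hasDerivAt_F' (K u c1 c2 : ℝ) {t : ℝ} (ht : t ≠ 0) :
    HasDerivAt (fun t => c1 * (Real.exp (K/t) * (-(K/t^2)) * (Real.exp (u*t) - 1)
          + (Real.exp (K/t) - 1) * (u * Real.exp (u*t)))
        + c2 * (u * Real.exp (u*t)))
      (c1 * ((Real.exp (K/t) * (-(K/t^2)) * (-(K/t^2)) + Real.exp (K/t) * (2*K/t^3)) * (Real.exp (u*t) - 1)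
            + Real.exp (K/t) * (-(K/t^2)) * (u * Real.exp (u*t))
          + (Real.exp (K/t) * (-(K/t^2)) * (u * Real.exp (u*t))
            + (Real.exp (K/t) - 1) * (u * (u * Real.exp (u*t)))))
        + c2 * (u * (u * Real.exp (u*t)))) t := by
  exact ((((hp' K ht).mul (hm' K ht)).mul ((hq' u t).sub_const 1)).add
    (((hp' K ht).sub_const 1).mul ((hq' u t).const_mul u))).const_mul c1 |>.add
    (((hq' u t).const_mul u).const_mul c2)

private lemma main_gen (K u c1 c2 c3 : ℝ) (hK : 0 < K) (hu : 0 < u) (hc1 : 0 < c1)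
    (hc2 : 0 < c2) :
    ConvexOn ℝ (Ioo 0 (Real.sqrt (K/u)))
      (fun t => c1 * ((Real.exp (K/t) - 1) * (Real.exp (u*t) - 1)) + c2 * Real.exp (u*t) + c3) ∧
    StrictMonoOn
      (fun t => c1 * ((Real.exp (K/t) - 1) * (Real.exp (u*t) - 1)) + c2 * Real.exp (u*t) + c3)
      (Ici (Real.sqrt (K/u))) := by
  set s := Real.sqrt (K/u) with hsdef
  have hKu : (0:ℝ) < K/u := div_pos hK hu
  have hs0 : 0 < s := Real.sqrt_pos.mpr hKu
  have hs2 : s^2 = K/u := Real.sq_sqrt hKu.le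
  constructor
  · -- convexity on Ioo 0 s
    apply convexOn_of_hasDerivWithinAt2_nonneg (convex_Ioo 0 s)
      (f' := fun t => c1 * (Real.exp (K/t) * (-(K/t^2)) * (Real.exp (u*t) - 1)
          + (Real.exp (K/t) - 1) * (u * Real.exp (u*t)))
        + c2 * (u * Real.exp (u*t)))
      (f'' := fun t => c1 * ((Real.exp (K/t) * (-(K/t^2)) * (-(K/t^2)) + Real.exp (K/t) * (2*K/t^3)) * (Real.exp (u*t) - 1)
            + Real.exp (K/t) * (-(K/t^2)) * (u * Real.exp (u*t))
          + (Real.exp (K/t) * (-(K/t^2)) * (u * Real.exp (u*t))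
            + (Real.exp (K/t) - 1) * (u * (u * Real.exp (u*t)))))
        + c2 * (u * (u * Real.exp (u*t))))
    · intro x hx
      exact ((hasDerivAt_F K u c1 c2 c3 (ne_of_gt hx.1)).continuousAt).continuousWithinAt
    · intro x hx
      rw [interior_Ioo] at hx
      exact ((hasDerivAt_F K u c1 c2 c3 (ne_of_gt hx.1)).hasDerivWithinAt)
    · intro x hx
      rw [interior_Ioo] at hx
      exact ((hasDerivAt_F' K u c1 c2 (ne_of_gt hx.1)).hasDerivWithinAt)
    · intro x hx
      rw [interior_Ioo] at hx
      obtain ⟨hx0, hxs⟩ := hx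
      have hb : 0 < u*x := mul_pos hu hx0
      have hba : u*x ≤ K/x := by
        rw [le_div_iff₀ hx0]
        have h1 : x*x ≤ s*s := mul_self_le_mul_self hx0.le hxs.le
        have h2 : u * (s*s) = K := by
          rw [show s*s = s^2 by ring, hs2]; field_simp
        nlinarith [mul_le_mul_of_nonneg_left h1 hu.le]
      have key := conv_key' hb hba
      have e2 : c1 * ((Real.exp (K/x) * (-(K/x^2)) * (-(K/x^2)) + Real.exp (K/x) * (2*K/x^3)) * (Real.exp (u*x) - 1)
            + Real.exp (K/x) * (-(K/x^2)) * (u * Real.exp (u*x))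
          + (Real.exp (K/x) * (-(K/x^2)) * (u * Real.exp (u*x))
            + (Real.exp (K/x) - 1) * (u * (u * Real.exp (u*x)))))
          = c1 * (((2*(K/x)+(K/x)^2) * Real.exp (K/x) * (Real.exp (u*x) - 1)
              + (Real.exp (K/x) - 1) * ((u*x)^2 * Real.exp (u*x))
              - 2*(K/x)*(u*x)*(Real.exp (K/x) * Real.exp (u*x))) / x^2) := by
        field_simp
        ring
      have hnn : 0 ≤ c1 * (((2*(K/x)+(K/x)^2) * Real.exp (K/x) * (Real.exp (u*x) - 1)
              + (Real.exp (K/x) - 1) * ((u*x)^2 * Real.exp (u*x))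
              - 2*(K/x)*(u*x)*(Real.exp (K/x) * Real.exp (u*x))) / x^2) := by
        apply mul_nonneg hc1.le
        apply div_nonneg (by linarith) (by positivity)
      have hq0 : (0:ℝ) ≤ c2 * (u * (u * Real.exp (u*x))) := by positivity
      rw [e2]
      linarith
  · -- strict monotonicity on Ici s
    apply strictMonoOn_of_deriv_pos (convex_Ici s)
    · intro x hx
      have hx0 : 0 < x := lt_of_lt_of_le hs0 hx
      exact ((hasDerivAt_F K u c1 c2 c3 (ne_of_gt hx0)).continuousAt).continuousWithinAt
    · intro x hx
      rw [interior_Ici] at hx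
      have hx0 : 0 < x := lt_trans hs0 hx
      rw [(hasDerivAt_F K u c1 c2 c3 (ne_of_gt hx0)).deriv]
      have ha : 0 < K/x := div_pos hK hx0
      have hab : K/x ≤ u*x := by
        rw [div_le_iff₀ hx0]
        have h1 : s*s ≤ x*x := mul_self_le_mul_self hs0.le hx.le
        have h2 : u * (s*s) = K := by
          rw [show s*s = s^2 by ring, hs2]; field_simp
        nlinarith [mul_le_mul_of_nonneg_left h1 hu.le]
      have key := mono_key' ha hab
      have e1 : c1 * (Real.exp (K/x) * (-(K/x^2)) * (Real.exp (u*x) - 1)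
          + (Real.exp (K/x) - 1) * (u * Real.exp (u*x)))
          = c1 * (((u*x) * Real.exp (u*x) * (Real.exp (K/x) - 1)
              - (K/x) * Real.exp (K/x) * (Real.exp (u*x) - 1)) / x) := by
        field_simp
        ring
      have hnn : 0 ≤ c1 * (((u*x) * Real.exp (u*x) * (Real.exp (K/x) - 1)
              - (K/x) * Real.exp (K/x) * (Real.exp (u*x) - 1)) / x) := by
        apply mul_nonneg hc1.le
        apply div_nonneg (by linarith) hx0.le
      have hq0 : (0:ℝ) < c2 * (u * Real.exp (u*x)) := by positivity
      rw [e1]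
      linarith

end CRIoTAux

noncomputable def Esum (u v lam D B N0 PS PC : ℝ) (t : ℝ) : ℝ :=
  let h := 1 / u + 1 / v
  N0 * B * (Real.exp (D * Real.log 2 / (B * t)) - 1) * (Real.exp (u * t) - 1)
    + PS * (h * Real.exp (u * t) + u / (v * (u + v + lam)) - h)
    + PC * (h * Real.exp (u * t) + 1 / lam + u / (v * (u + v + lam)) - h)

theorem statement16 (u v lam D B N0 PS PC : ℝ) (hu : 0 < u) (hv : 0 < v)
    (hlam : 0 < lam) (hD : 0 < D) (hB : 0 < B) (hN0 : 0 < N0) (hPS : 0 < PS)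
    (hPC : 0 < PC) :
    ConvexOn ℝ (Ioo 0 (Real.sqrt (D * Real.log 2 / (B * u))))
      (Esum u v lam D B N0 PS PC) ∧
    StrictMonoOn (Esum u v lam D B N0 PS PC)
      (Ici (Real.sqrt (D * Real.log 2 / (B * u)))) := by
  have hK : 0 < D * Real.log 2 / B := div_pos (mul_pos hD (Real.log_pos one_lt_two)) hB
  have hsq : D * Real.log 2 / (B * u) = (D * Real.log 2 / B) / u := (div_div _ _ _).symm
  have hEq : Esum u v lam D B N0 PS PC
      = fun t => (N0*B) * ((Real.exp ((D * Real.log 2 / B)/t) - 1) * (Real.exp (u*t) - 1))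
        + ((PS+PC)*(1/u+1/v)) * Real.exp (u*t)
        + (PS*(u/(v*(u+v+lam)) - (1/u+1/v)) + PC*(1/lam + u/(v*(u+v+lam)) - (1/u+1/v))) := by
    funext t
    have ht : D * Real.log 2 / (B * t) = (D * Real.log 2 / B) / t := (div_div _ _ _).symm
    simp only [Esum, ht]
    ring
  rw [hsq, hEq]
  exact main_gen (D * Real.log 2 / B) u (N0*B) ((PS+PC)*(1/u+1/v)) _ hK hu
    (mul_pos hN0 hB) (by positivity)
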